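/- Under assumption A1, for any x ∈ F_p⁰, μ > 0 and τ ∈ (0, 1), the proximity measure after reducing the barrier parameter satisfies δ(x, (1−τ)μ) ≤ (δ(x, μ) + τ√n) / (1 − τ). -/

import Mathlib

open Matrix

noncomputable def enorm {ι : Type*} [Fintype ι] (v : ι → ℝ) : ℝ :=
  Real.sqrt (∑ i, (v i) ^ 2)

noncomputable def opNorm {ι κ : Type*} [Fintype ι] [Fintype κ]
    (M : Matrix ι κ ℝ) : ℝ :=
  sSup {r : ℝ | ∃ v : κ → ℝ, _root_.enorm v ≤ 1 ∧ r = _root_.enorm (M *ᵥ v)}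

noncomputable def lambdaMin {ι : Type*} [Fintype ι] (M : Matrix ι ι ℝ) : ℝ :=
  sInf {r : ℝ | ∃ v : ι → ℝ, _root_.enorm v = 1 ∧ r = v ⬝ᵥ (M *ᵥ v)}

noncomputable def lambdaMax {ι : Type*} [Fintype ι] (M : Matrix ι ι ℝ) : ℝ :=
  sSup {r : ℝ | ∃ v : ι → ℝ, _root_.enorm v = 1 ∧ r = v ⬝ᵥ (M *ᵥ v)}

noncomputable def condNum {ι : Type*} [Fintype ι] (M : Matrix ι ι ℝ) : ℝ :=
  lambdaMax M / lambdaMin M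

noncomputable def gradProj {m n : ℕ} (B : Matrix (Fin m) (Fin n) ℝ) :
    Matrix (Fin n) (Fin n) ℝ :=
  1 - Bᵀ * (B * Bᵀ)⁻¹ * B

/-- The proximity measure `δ(x, μ) = ‖P_{AX}((1/μ) X c - e)‖`. -/
noncomputable def prox {m n : ℕ} (A : Matrix (Fin m) (Fin n) ℝ)
    (c x : Fin n → ℝ) (μ : ℝ) : ℝ :=
  _root_.enorm (gradProj (A * Matrix.diagonal x) *ᵥ (μ⁻¹ • (Matrix.diagonal x *ᵥ c) - 1))

/-- The proximity measure as `min_{(y,s) ∈ F_d} ‖(1/μ) X s - e‖`. -/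
noncomputable def proxMin {m n : ℕ} (A : Matrix (Fin m) (Fin n) ℝ)
    (c x : Fin n → ℝ) (μ : ℝ) : ℝ :=
  sInf {r : ℝ | ∃ (y : Fin m → ℝ) (s : Fin n → ℝ),
    Aᵀ *ᵥ y + s = c ∧ (∀ i, 0 ≤ s i) ∧
    r = _root_.enorm (μ⁻¹ • (Matrix.diagonal x *ᵥ s) - 1)}

/-- The primal normal matrix `A X² Aᵀ` is positive semidefinite. -/
theorem normalPSD {m n : ℕ} (A : Matrix (Fin m) (Fin n) ℝ) (x : Fin n → ℝ) :
    (A * Matrix.diagonal x ^ 2 * Aᵀ).PosSemidef := by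
  have h : A * Matrix.diagonal x ^ 2 * Aᵀ
      = (A * Matrix.diagonal x) * (A * Matrix.diagonal x)ᴴ := by
    rw [Matrix.conjTranspose_mul, Matrix.conjTranspose_eq_transpose_of_trivial,
      Matrix.conjTranspose_eq_transpose_of_trivial, Matrix.diagonal_transpose, pow_two,
      Matrix.mul_assoc, Matrix.mul_assoc, Matrix.mul_assoc]
  rw [h]
  exact Matrix.posSemidef_self_mul_conjTranspose _

section MyHelpers

lemma my_enorm_nonneg {n : ℕ} (v : Fin n → ℝ) : 0 ≤ _root_.enorm v := Real.sqrt_nonneg _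

lemma my_enorm_sq {n : ℕ} (v : Fin n → ℝ) : _root_.enorm v ^ 2 = v ⬝ᵥ v := by
  rw [_root_.enorm, Real.sq_sqrt (by positivity)]
  simp [dotProduct, sq]

lemma my_dot_le {n : ℕ} (u w : Fin n → ℝ) : u ⬝ᵥ w ≤ _root_.enorm u * _root_.enorm w := by
  have h := Finset.sum_mul_sq_le_sq_mul_sq Finset.univ u w
  have h2 : u ⬝ᵥ w ≤ Real.sqrt ((∑ i, u i ^ 2) * ∑ i, w i ^ 2) := by
    calc u ⬝ᵥ w ≤ |u ⬝ᵥ w| := le_abs_self _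
      _ = Real.sqrt ((u ⬝ᵥ w) ^ 2) := (Real.sqrt_sq_eq_abs _).symm
      _ ≤ _ := Real.sqrt_le_sqrt h
  rwa [Real.sqrt_mul (by positivity)] at h2

lemma my_enorm_add_le {n : ℕ} (u v : Fin n → ℝ) : _root_.enorm (u + v) ≤ _root_.enorm u + _root_.enorm v := by
  have h1 : _root_.enorm (u + v) ^ 2 ≤ (_root_.enorm u + _root_.enorm v) ^ 2 := by
    rw [my_enorm_sq]
    have hd : (u + v) ⬝ᵥ (u + v) = u ⬝ᵥ u + 2 * (u ⬝ᵥ v) + v ⬝ᵥ v := by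
      simp [add_dotProduct, dotProduct_add, dotProduct_comm v u]; ring
    have := my_dot_le u v
    have hu := my_enorm_sq u
    have hv := my_enorm_sq v
    nlinarith
  calc _root_.enorm (u + v) = Real.sqrt (_root_.enorm (u + v) ^ 2) := (Real.sqrt_sq (my_enorm_nonneg _)).symm
    _ ≤ Real.sqrt ((_root_.enorm u + _root_.enorm v) ^ 2) := Real.sqrt_le_sqrt h1
    _ = _root_.enorm u + _root_.enorm v := Real.sqrt_sq (add_nonneg (my_enorm_nonneg u) (my_enorm_nonneg v))

lemma my_enorm_smul {n : ℕ} (a : ℝ) (v : Fin n → ℝ) : _root_.enorm (a • v) = |a| * _root_.enorm v := by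
  simp only [_root_.enorm, Pi.smul_apply, smul_eq_mul, mul_pow, ← Finset.mul_sum,
    Real.sqrt_mul (sq_nonneg a), Real.sqrt_sq_eq_abs]

lemma my_enorm_one {n : ℕ} : _root_.enorm (1 : Fin n → ℝ) = Real.sqrt n := by
  simp [_root_.enorm]

lemma my_proj_contract {n : ℕ} {P : Matrix (Fin n) (Fin n) ℝ} (hsym : Pᵀ = P)
    (hidem : P * P = P) (u : Fin n → ℝ) : _root_.enorm (P *ᵥ u) ≤ _root_.enorm u := by
  set w := P *ᵥ u with hw
  have h1 : w ⬝ᵥ w = u ⬝ᵥ w := by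
    rw [hw]
    symm
    nth_rewrite 1 [← hidem]
    nth_rewrite 1 [← hsym]
    rw [← Matrix.mulVec_mulVec, Matrix.dotProduct_mulVec, Matrix.vecMul_transpose]
  rcases eq_or_lt_of_le (my_enorm_nonneg w) with h | h
  · rw [← h]; exact my_enorm_nonneg u
  · have h2 : _root_.enorm w ^ 2 ≤ _root_.enorm u * _root_.enorm w := by
      rw [my_enorm_sq, h1]; exact my_dot_le u w
    nlinarith

lemma my_At_inj {m n : ℕ} (A : Matrix (Fin m) (Fin n) ℝ) (hrank : A.rank = m) :
    ∀ y : Fin m → ℝ, Aᵀ *ᵥ y = 0 → y = 0 := by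
  rw [← Matrix.ker_mulVecLin_eq_bot_iff]
  have h1 : Aᵀ.rank = m := by rw [Matrix.rank_transpose]; exact hrank
  have h2 := LinearMap.finrank_range_add_finrank_ker (Aᵀ.mulVecLin)
  rw [Matrix.rank] at h1
  have h3 : Module.finrank ℝ (Fin m → ℝ) = m := by simp
  rw [h1, h3] at h2
  have h4 : Module.finrank ℝ (LinearMap.ker Aᵀ.mulVecLin) = 0 := by omega
  exact Submodule.finrank_eq_zero.mp h4

lemma my_BBt_unit {m n : ℕ} (A : Matrix (Fin m) (Fin n) ℝ) (hrank : A.rank = m)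
    (x : Fin n → ℝ) (hx : ∀ i, 0 < x i) :
    IsUnit ((A * Matrix.diagonal x) * (A * Matrix.diagonal x)ᵀ).det := by
  set B := A * Matrix.diagonal x with hB
  rw [← Matrix.isUnit_iff_isUnit_det, ← Matrix.mulVec_injective_iff_isUnit]
  have hker : ∀ y : Fin m → ℝ, (B * Bᵀ) *ᵥ y = 0 → y = 0 := by
    intro y hy
    have h1 : (Bᵀ *ᵥ y) ⬝ᵥ (Bᵀ *ᵥ y) = 0 := by
      rw [Matrix.dotProduct_mulVec, Matrix.vecMul_transpose, Matrix.mulVec_mulVec, hy,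
        zero_dotProduct]
    have h2 : Bᵀ *ᵥ y = 0 := by
      rwa [dotProduct_self_eq_zero] at h1
    have h3 : Matrix.diagonal x *ᵥ (Aᵀ *ᵥ y) = 0 := by
      rw [Matrix.mulVec_mulVec, ← Matrix.diagonal_transpose, ← Matrix.transpose_mul, ← hB]
      exact h2
    have h4 : Aᵀ *ᵥ y = 0 := by
      funext i
      have h5 := congrFun h3 i
      simp only [Matrix.mulVec_diagonal, Pi.zero_apply] at h5 ⊢
      exact (mul_eq_zero.mp h5).resolve_left (hx i).ne'

    exact my_At_inj A hrank y h4
  have : LinearMap.ker (B * Bᵀ).mulVecLin = ⊥ := Matrix.ker_mulVecLin_eq_bot_iff.mpr hker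
  have hinj := LinearMap.ker_eq_bot.mp this
  exact fun a b hab => hinj hab

lemma my_gradProj_sym {m n : ℕ} (B : Matrix (Fin m) (Fin n) ℝ)
    (h : IsUnit (B * Bᵀ).det) : (gradProj B)ᵀ = gradProj B := by
  rw [gradProj, Matrix.transpose_sub, Matrix.transpose_one, Matrix.transpose_mul,
    Matrix.transpose_mul, Matrix.transpose_transpose, Matrix.transpose_nonsing_inv,
    Matrix.transpose_mul, Matrix.transpose_transpose, Matrix.mul_assoc]

lemma my_gradProj_idem {m n : ℕ} (B : Matrix (Fin m) (Fin n) ℝ)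
    (h : IsUnit (B * Bᵀ).det) : gradProj B * gradProj B = gradProj B := by
  have hQ : (Bᵀ * (B * Bᵀ)⁻¹ * B) * (Bᵀ * (B * Bᵀ)⁻¹ * B) = Bᵀ * (B * Bᵀ)⁻¹ * B := by
    have h1 : (Bᵀ * (B * Bᵀ)⁻¹ * B) * (Bᵀ * (B * Bᵀ)⁻¹ * B)
        = Bᵀ * (B * Bᵀ)⁻¹ * ((B * Bᵀ) * ((B * Bᵀ)⁻¹ * B)) := by
      simp only [Matrix.mul_assoc]
    rw [h1, Matrix.mul_nonsing_inv_cancel_left _ _ h, Matrix.mul_assoc]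
  rw [gradProj]
  simp only [Matrix.sub_mul, Matrix.mul_sub, Matrix.one_mul, Matrix.mul_one, hQ]
  abel

lemma my_proj_enorm_le {m n : ℕ} (B : Matrix (Fin m) (Fin n) ℝ)
    (h : IsUnit (B * Bᵀ).det) (u : Fin n → ℝ) :
    _root_.enorm (gradProj B *ᵥ u) ≤ _root_.enorm u :=
  my_proj_contract (my_gradProj_sym B h) (my_gradProj_idem B h) u

end MyHelpers

/-- path-following bound on the proximity measure after
reducing the barrier parameter. -/
theorem stmt_10 {m n : ℕ} (A : Matrix (Fin m) (Fin n) ℝ) (b : Fin m → ℝ) (c : Fin n → ℝ)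
    -- Assumption A1: nonempty primal and dual interiors, full row rank
    (hrank : A.rank = m)
    (hFp0 : ∃ x0 : Fin n → ℝ, A *ᵥ x0 = b ∧ ∀ i, 0 < x0 i)
    (hFd0 : ∃ (y0 : Fin m → ℝ) (s0 : Fin n → ℝ), Aᵀ *ᵥ y0 + s0 = c ∧ ∀ i, 0 < s0 i)
    (x : Fin n → ℝ) (hxfeas : A *ᵥ x = b) (hxpos : ∀ i, 0 < x i)
    (μ : ℝ) (hμ : 0 < μ)
    (τ : ℝ) (hτ0 : 0 < τ) (hτ1 : τ < 1) :
    prox A c x ((1 - τ) * μ) ≤ (prox A c x μ + τ * Real.sqrt n) / (1 - τ) := by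
  have hdet : IsUnit ((A * Matrix.diagonal x) * (A * Matrix.diagonal x)ᵀ).det :=
    my_BBt_unit A hrank x hxpos
  set B := A * Matrix.diagonal x with hB
  set X := Matrix.diagonal x with hX
  have h1τ : (0:ℝ) < 1 - τ := by linarith
  set v := μ⁻¹ • (X *ᵥ c) - 1 with hv
  have hvec : ((1 - τ) * μ)⁻¹ • (X *ᵥ c) - 1 = (1 - τ)⁻¹ • (v + τ • (1 : Fin n → ℝ)) := by
    funext i
    simp only [hv, Pi.sub_apply, Pi.smul_apply, Pi.add_apply, Pi.one_apply, smul_eq_mul]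
    field_simp
    ring
  have hgoal : prox A c x ((1 - τ) * μ)
      = (1 - τ)⁻¹ * _root_.enorm (gradProj B *ᵥ v + τ • (gradProj B *ᵥ (1 : Fin n → ℝ))) := by
    rw [prox, ← hB, ← hX, hvec, Matrix.mulVec_smul, my_enorm_smul,
      abs_of_pos (inv_pos.mpr h1τ), Matrix.mulVec_add, Matrix.mulVec_smul]
  rw [hgoal, div_eq_inv_mul]
  apply mul_le_mul_of_nonneg_left _ (le_of_lt (inv_pos.mpr h1τ))
  have htri := my_enorm_add_le (gradProj B *ᵥ v) (τ • (gradProj B *ᵥ (1 : Fin n → ℝ)))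
  have h2 : _root_.enorm (τ • (gradProj B *ᵥ (1 : Fin n → ℝ)))
      = τ * _root_.enorm (gradProj B *ᵥ (1 : Fin n → ℝ)) := by
    rw [my_enorm_smul, abs_of_pos hτ0]
  have h3 : _root_.enorm (gradProj B *ᵥ (1 : Fin n → ℝ)) ≤ Real.sqrt n :=
    le_of_le_of_eq (my_proj_enorm_le B hdet 1) my_enorm_one
  have h4 : _root_.enorm (gradProj B *ᵥ v) = prox A c x μ := by
    rw [prox, ← hB, ← hX, ← hv]
  nlinarith [htri, h2, h3, h4]
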